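/- Let Θ be a compact metric space, r:Θ→Θ continuous, and let f:Θ×T¹→Θ×T¹, f(θ,φ)=(r(θ),f_θ(φ)), be a continuous skew product all of whose fibre maps preserve the cyclic order of T¹ (a forced monotone circle map). Then for every θ₀ ∈ Θ the Bowen topological entropy of the fibre {θ₀}×T¹ is zero: h_top(f, {θ₀}×T¹) = 0. Indeed, for every ε > 0 the minimal number R(f,{θ₀}×T¹,n,ε) of (f,n,ε)-balls needed to cover {θ₀}×T¹ grows at most linearly in n. -/

import Mathlib

open Filter Topology Set

theorem Real.fact_zero_lt_one : Fact ((0 : ℝ) < 1) :=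
  ⟨zero_lt_one⟩

attribute [local instance] Real.fact_zero_lt_one

private lemma coe_equivIco_eq (z : AddCircle (1:ℝ)) :
    (((AddCircle.equivIco 1 0 z) : ℝ) : AddCircle (1:ℝ)) = z :=
  (QuotientAddGroup.equivIcoMod Real.fact_zero_lt_one.out 0).symm_apply_apply z

private lemma equivIco_mem (z : AddCircle (1:ℝ)) :
    ((AddCircle.equivIco 1 0 z) : ℝ) ∈ Set.Ico (0:ℝ) 1 := by
  simpa using (AddCircle.equivIco 1 0 z).2

private lemma dist_coe_le (u v : ℝ) :
    dist ((u:AddCircle (1:ℝ))) (v : AddCircle (1:ℝ)) ≤ |u - v| := by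
  rw [dist_eq_norm]
  have h : ((u:AddCircle (1:ℝ))) - v = ((u - v : ℝ) : AddCircle (1:ℝ)) := by
    rw [AddCircle.coe_sub]
  rw [h]
  exact (QuotientAddGroup.norm_mk_le_norm (m := u - v)).trans_eq (Real.norm_eq_abs _)

private lemma dist_le_half (x y : AddCircle (1:ℝ)) : dist x y ≤ 1/2 := by
  rw [dist_eq_norm]
  simpa using AddCircle.norm_le_half_period (1:ℝ) one_ne_zero (x := x - y)

private lemma btw_sub {a b c : AddCircle (1:ℝ)} (h : Btw.btw a b c) :
    Btw.btw (0:AddCircle (1:ℝ)) (b - a) (c - a) := by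
  show (_ ≤ _)
  simp only [sub_zero]; exact h

private lemma btw_zero_iff {u v : ℝ} (hu : u ∈ Set.Ico (0:ℝ) 1) (hv : v ∈ Set.Ico (0:ℝ) 1) :
    Btw.btw (0:AddCircle (1:ℝ)) (u : AddCircle (1:ℝ)) (v : AddCircle (1:ℝ)) ↔ (u ≤ v ∨ v = 0) := by
  have h0 : ((0:ℝ) : AddCircle (1:ℝ)) = 0 := by norm_cast
  rw [← h0, QuotientAddGroup.btw_coe_iff]
  rw [(toIcoMod_eq_self one_pos).2 (by simpa using hu)]
  rcases eq_or_ne v 0 with rfl | hv0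
  · rw [toIocMod_apply_left one_pos]
    simp [hu.2.le]
  · rw [(toIocMod_eq_self one_pos).2 ⟨lt_of_le_of_ne hv.1 (Ne.symm hv0), by simpa using hv.2.le⟩]
    simp [hv0]

/-- monotone companion of a continuous cyclic-order preserving circle map -/
private lemma key (g : AddCircle (1:ℝ) → AddCircle (1:ℝ)) (hg : Continuous g)
    (hb : ∀ a b c, Btw.btw a b c → Btw.btw (g a) (g b) (g c)) :
    ∃ φ : ℝ → ℝ, (∀ x y, x ∈ Set.Ico (0:ℝ) 1 → y ∈ Set.Ico (0:ℝ) 1 → x ≤ y → φ x ≤ φ y) ∧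
      (∀ x, x ∈ Set.Ico (0:ℝ) 1 → φ x ∈ Set.Icc (0:ℝ) 2) ∧
      (∀ x y, x ∈ Set.Ico (0:ℝ) 1 → y ∈ Set.Ico (0:ℝ) 1 →
        dist (g x) (g y) ≤ |φ x - φ y|) := by
  classical
  set h : ℝ → ℝ := fun x => ((AddCircle.equivIco 1 0 (g x - g 0)) : ℝ) with hh
  have hmem : ∀ x, h x ∈ Set.Ico (0:ℝ) 1 := fun x => equivIco_mem _
  have hq : ∀ x : ℝ, ((h x : ℝ) : AddCircle (1:ℝ)) = g x - g 0 := fun x => coe_equivIco_eq _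
  have hgx : ∀ x : ℝ, g x = g 0 + ((h x : ℝ) : AddCircle (1:ℝ)) := by
    intro x; rw [hq]; abel
  have h0 : ((0:ℝ) : AddCircle (1:ℝ)) = 0 := by norm_cast
  have btw_mk : ∀ x y z : ℝ, x ≤ y → y ≤ z → z < x + 1 →
      Btw.btw ((x:ℝ) : AddCircle (1:ℝ)) ((y:ℝ) : AddCircle (1:ℝ)) ((z:ℝ) : AddCircle (1:ℝ)) := by
    intro x y z hxy hyz hz1
    rw [QuotientAddGroup.btw_coe_iff]
    rw [(toIcoMod_eq_self one_pos).2 ⟨hxy, by linarith⟩]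
    rcases eq_or_lt_of_le (hxy.trans hyz) with heq | hlt
    · rw [← heq, toIocMod_apply_left one_pos]; linarith
    · rw [(toIocMod_eq_self one_pos).2 ⟨hlt, by linarith⟩]; exact hyz
  -- Fact 1
  have fact1 : ∀ x y : ℝ, x ∈ Set.Ico (0:ℝ) 1 → y ∈ Set.Ico (0:ℝ) 1 → x ≤ y →
      (h x ≤ h y ∨ h y = 0) := by
    intro x y hx hy hxy
    have b2 := hb _ _ _ (btw_mk 0 x y hx.1 hxy (by linarith [hy.2]))
    rw [h0] at b2
    have b3 := btw_sub b2
    rw [← hq x, ← hq y] at b3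
    rwa [btw_zero_iff (hmem x) (hmem y)] at b3
  -- Fact 2
  have fact2 : ∀ x y z : ℝ, x ∈ Set.Ico (0:ℝ) 1 → z ∈ Set.Ico (0:ℝ) 1 →
      x ≤ y → y ≤ z → h y = 0 → (h z ≤ h x ∨ h x = 0) := by
    intro x y z hx hz hxy hyz hy0
    have hy : y ∈ Set.Ico (0:ℝ) 1 := ⟨le_trans hx.1 hxy, lt_of_le_of_lt hyz hz.2⟩
    have b1 := btw_mk x y z hxy hyz (by linarith [hz.2, hx.1])
    have b2 := hb _ _ _ b1
    have b3 := btw_cyclic_left b2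
    have b4 := btw_sub b3
    -- g y = g 0 since h y = 0
    have hgy : g y = g 0 := by rw [hgx y, hy0]; simp
    rw [hgy] at b4
    have e1 : g z - g 0 = ((h z : ℝ) : AddCircle (1:ℝ)) := (hq z).symm
    have e2 : g x - g 0 = ((h x : ℝ) : AddCircle (1:ℝ)) := (hq x).symm
    rw [e1, e2] at b4
    rwa [btw_zero_iff (hmem z) (hmem x)] at b4
  -- Claim A
  have claimA : ∀ x y z : ℝ, x ∈ Set.Ico (0:ℝ) 1 → z ∈ Set.Ico (0:ℝ) 1 →
      x ≤ y → y ≤ z → 0 < h x → h y = 0 → h z = 0 := by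
    intro x y z hx hz hxy hyz hxpos hy0
    have hy : y ∈ Set.Ico (0:ℝ) 1 := ⟨le_trans hx.1 hxy, lt_of_le_of_lt hyz hz.2⟩
    have hgy : g y = g 0 := by rw [hgx y, hy0]; simp
    have hne : g x ≠ g y := by
      rw [hgy, hgx x]
      intro hcon
      have : ((h x : ℝ) : AddCircle (1:ℝ)) = 0 := by
        have := hcon
        nth_rewrite 2 [show (g 0 : AddCircle (1:ℝ)) = g 0 + 0 by simp] at this
        exact add_left_cancel this
      rw [AddCircle.coe_eq_zero_iff_of_mem_Ico (by simpa using hmem x)] at this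
      exact hxpos.ne' this
    set d0 : ℝ := dist (g x) (g y) with hd0
    have hd0pos : 0 < d0 := dist_pos.2 hne
    -- IVT
    have hcont : ContinuousOn (fun w : ℝ => dist (g (w : AddCircle (1:ℝ))) (g x))
        (Set.Icc x y) := by
      apply Continuous.continuousOn
      exact (hg.comp (AddCircle.continuous_mk' 1)).dist continuous_const
    have hivt := intermediate_value_Icc hxy hcont
    have hmemIcc : d0/2 ∈ Set.Icc (dist (g (x : AddCircle (1:ℝ))) (g x))
        (dist (g (y : AddCircle (1:ℝ))) (g x)) := by
      simp only [dist_self]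
      constructor
      · positivity
      · rw [dist_comm]; exact by linarith
    obtain ⟨w, hw, hweq⟩ := hivt hmemIcc
    dsimp only at hweq
    have hww : w ∈ Set.Ico (0:ℝ) 1 := ⟨le_trans hx.1 hw.1, lt_of_le_of_lt hw.2 hy.2⟩
    have hwne0 : h w ≠ 0 := by
      intro hcon
      have : g w = g 0 := by rw [hgx w, hcon]; simp
      rw [this, ← hgy, dist_comm, ← hd0] at hweq
      linarith
    have hwnex : h w ≠ h x := by
      intro hcon
      have : g (w : AddCircle (1:ℝ)) = g x := by rw [hgx w, hgx x, hcon]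
      rw [this, dist_self] at hweq
      linarith
    have hxw : h x < h w := by
      rcases fact1 x w hx hww hw.1 with h1 | h1
      · exact lt_of_le_of_ne h1 (Ne.symm hwnex)
      · exact absurd h1 hwne0
    rcases fact1 w z hww hz (le_trans hw.2 hyz) with h1 | h1
    · rcases fact2 x y z hx hz hxy hyz hy0 with h2 | h2
      · linarith
      · exact absurd h2 hxpos.ne'
    · exact h1
  -- the dead zone
  set T : Set ℝ := {x | x ∈ Set.Ico (0:ℝ) 1 ∧ h x = 0 ∧ ∃ t, 0 ≤ t ∧ t ≤ x ∧ 0 < h t} with hT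
  have Tup : ∀ x y, x ∈ T → y ∈ Set.Ico (0:ℝ) 1 → x ≤ y → y ∈ T := by
    intro x y hx hy hxy
    obtain ⟨hxI, hx0, t, ht0, htx, htpos⟩ := hx
    refine ⟨hy, ?_, t, ht0, le_trans htx hxy, htpos⟩
    exact claimA t x y ⟨ht0, lt_of_le_of_lt htx hxI.2⟩ hy htx hxy htpos hx0
  refine ⟨fun x => if x ∈ T then 2 else h x, ?_, ?_, ?_⟩
  · -- monotone
    intro x y hx hy hxy
    dsimp only
    by_cases hyT : y ∈ T
    · rw [if_pos hyT]
      by_cases hxT : x ∈ T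
      · rw [if_pos hxT]
      · rw [if_neg hxT]; linarith [(hmem x).2]
    · have hxT : x ∉ T := fun hc => hyT (Tup x y hc hy hxy)
      rw [if_neg hxT, if_neg hyT]
      rcases fact1 x y hx hy hxy with h1 | h1
      · exact h1
      · -- h y = 0, y ∉ T means no positive earlier value; in particular h x = 0
        rcases lt_or_eq_of_le (hmem x).1 with hxpos | hx0
        · exact absurd ⟨hy, h1, x, hx.1, hxy, hxpos⟩ hyT
        · rw [← hx0, h1]
  · intro x hx
    dsimp only
    by_cases hxT : x ∈ T
    · rw [if_pos hxT]; exact ⟨by norm_num, le_refl 2⟩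
    · rw [if_neg hxT]; exact ⟨(hmem x).1, by linarith [(hmem x).2]⟩
  · -- distance bound; prove for x ≤ y, then wlog
    have main : ∀ x y, x ∈ Set.Ico (0:ℝ) 1 → y ∈ Set.Ico (0:ℝ) 1 → x ≤ y →
        dist (g (x : AddCircle (1:ℝ))) (g y) ≤
          |(if x ∈ T then (2:ℝ) else h x) - (if y ∈ T then (2:ℝ) else h y)| := by
      intro x y hx hy hxy
      by_cases hyT : y ∈ T
      · by_cases hxT : x ∈ T
        · have h1 : g (x : AddCircle (1:ℝ)) = g 0 := by rw [hgx x, hxT.2.1]; simp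
          have h2 : g (y : AddCircle (1:ℝ)) = g 0 := by rw [hgx y, hyT.2.1]; simp
          rw [h1, h2, dist_self, if_pos hxT, if_pos hyT]
          simp
        · rw [if_neg hxT, if_pos hyT]
          have : |h x - 2| = 2 - h x := by
            rw [abs_sub_comm, abs_of_nonneg (by linarith [(hmem x).2])]
          rw [this]
          linarith [dist_le_half (g (x : AddCircle (1:ℝ))) (g y), (hmem x).2]
      · have hxT : x ∉ T := fun hc => hyT (Tup x y hc hy hxy)
        rw [if_neg hxT, if_neg hyT]
        rw [hgx x, hgx y, dist_add_left]
        exact dist_coe_le _ _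
    intro x y hx hy
    rcases le_total x y with hxy | hxy
    · exact main x y hx hy hxy
    · rw [dist_comm, abs_sub_comm]
      exact main y x hy hx hxy

open scoped ENNReal NNReal
open Dynamics

private lemma entourage_le {X : Type*} [UniformSpace X] (T : X → X) (F : Set X)
    (U : Set (X × X)) (C : ℕ) (hC : 1 ≤ C)
    (hb : ∀ n, Dynamics.coverMincard T F U n ≤ ((C * (n + 1) : ℕ) : ℕ∞)) :
    Dynamics.coverEntropyEntourage T F U ≤ 0 := by
  have hCpos : (0:ℝ) < C := by exact_mod_cast hC
  have hlog : ∀ n : ℕ, 1 ≤ n → ENNReal.log (Dynamics.coverMincard T F U n) / (n : EReal)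
      ≤ ((Real.log (C * (n+1)) / n : ℝ) : EReal) := by
    intro n hn
    have h1 : ENNReal.log (Dynamics.coverMincard T F U n)
        ≤ ENNReal.log (((C * (n + 1) : ℕ) : ℝ≥0∞)) := by
      apply ENNReal.log_monotone
      rw [← ENat.toENNReal_coe]
      exact ENat.toENNReal_le.2 (hb n)
    have h2 : ENNReal.log (((C * (n + 1) : ℕ) : ℝ≥0∞)) = ((Real.log (C * (n+1)) : ℝ) : EReal) := by
      rw [← ENNReal.ofReal_natCast, ENNReal.log_ofReal_of_pos (by positivity)]
      norm_num
    have h3 : ((Real.log (C * (n+1)) / n : ℝ) : EReal)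
        = ((Real.log (C * (n+1)) : ℝ) : EReal) / (n : EReal) := by
      rw [EReal.coe_div, EReal.coe_coe_eq_natCast]
    rw [h3, ← h2]
    exact EReal.div_le_div_right_of_nonneg (by exact_mod_cast Nat.zero_le n) h1
  have htendR : Tendsto (fun n : ℕ => (Real.log (C * (n+1)) / n : ℝ)) atTop (𝓝 0) := by
    have hcomp : Tendsto (fun n : ℕ => ((C:ℝ) * (n+1))) atTop atTop := by
      apply Tendsto.const_mul_atTop hCpos
      exact tendsto_atTop_add_const_right _ 1 tendsto_natCast_atTop_atTop
    have h1 : (fun n : ℕ => Real.log ((C:ℝ) * (n+1))) =o[atTop] (fun n : ℕ => (C:ℝ) * (n+1)) :=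
      (Real.isLittleO_log_id_atTop).comp_tendsto hcomp
    have h2 : (fun n : ℕ => (C:ℝ) * (n+1)) =O[atTop] (fun n : ℕ => (n:ℝ)) := by
      apply Asymptotics.IsBigO.of_bound (2*C)
      filter_upwards [eventually_ge_atTop 1] with n hn
      have hn1 : (1:ℝ) ≤ n := by exact_mod_cast hn
      rw [Real.norm_eq_abs, Real.norm_eq_abs, abs_of_nonneg (by positivity),
        abs_of_nonneg (by positivity)]
      nlinarith
    exact (h1.trans_isBigO h2).tendsto_div_nhds_zero
  have htend : Tendsto (fun n : ℕ => ((Real.log (C * (n+1)) / n : ℝ) : EReal)) atTop (𝓝 0) := by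
    have := (EReal.tendsto_coe (a := (0:ℝ))).2 htendR
    simpa using this
  calc Dynamics.coverEntropyEntourage T F U
      ≤ atTop.limsup (fun n : ℕ => ((Real.log (C * (n+1)) / n : ℝ) : EReal)) := by
        apply Filter.limsup_le_limsup ?_ isCobounded_le_of_bot isBounded_le_of_top
        filter_upwards [eventually_ge_atTop 1] with n hn
        exact hlog n hn
    _ = 0 := htend.limsup_eq

theorem stmt12 {Θ : Type*} [MetricSpace Θ] [CompactSpace Θ]
    (r : Θ → Θ) (hr : Continuous r)
    (f : Θ × AddCircle (1 : ℝ) → Θ × AddCircle (1 : ℝ)) (hf : Continuous f)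
    (hskew : ∀ p : Θ × AddCircle (1 : ℝ), (f p).1 = r p.1)
    -- every fibre map preserves the cyclic order of the circle
    (hmono : ∀ (θ : Θ) (a b c : AddCircle (1 : ℝ)), Btw.btw a b c →
      Btw.btw (f (θ, a)).2 (f (θ, b)).2 (f (θ, c)).2) :
    ∀ θ₀ : Θ,
      -- the Bowen topological entropy of the fibre `{θ₀} × T¹` is zero
      Dynamics.coverEntropy f ({θ₀} ×ˢ (Set.univ : Set (AddCircle (1 : ℝ)))) = 0 ∧
      -- indeed, for every `ε > 0` the minimal number of `(f,n,ε)`-balls needed to cover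
      -- the fibre grows at most linearly in `n`
      ∀ ε > (0 : ℝ), ∃ C : ℕ, ∀ n : ℕ,
        Dynamics.coverMincard f ({θ₀} ×ˢ (Set.univ : Set (AddCircle (1 : ℝ))))
          {p : (Θ × AddCircle (1 : ℝ)) × (Θ × AddCircle (1 : ℝ)) | dist p.1 p.2 < ε} n
          ≤ ((C * (n + 1) : ℕ) : ℕ∞) := by
  intro θ₀
  classical
  set Fib : Set (Θ × AddCircle (1:ℝ)) := {θ₀} ×ˢ (Set.univ : Set (AddCircle (1 : ℝ))) with hFib
  -- the fibre maps of the iterates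
  set Fb : ℕ → AddCircle (1:ℝ) → AddCircle (1:ℝ) := fun i φ => (f^[i] (θ₀, φ)).2 with hFbdef
  have hfst : ∀ (i : ℕ) (φ : AddCircle (1:ℝ)), (f^[i] (θ₀, φ)).1 = r^[i] θ₀ := by
    intro i
    induction i with
    | zero => intro φ; simp
    | succ i ih =>
        intro φ
        rw [Function.iterate_succ_apply', Function.iterate_succ_apply', hskew, ih]
  have hpair : ∀ (i : ℕ) (φ : AddCircle (1:ℝ)), f^[i] (θ₀, φ) = (r^[i] θ₀, Fb i φ) :=
    fun i φ => Prod.ext (hfst i φ) rfl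
  have hFbsucc : ∀ (i : ℕ) (φ : AddCircle (1:ℝ)), Fb (i+1) φ = (f (r^[i] θ₀, Fb i φ)).2 := by
    intro i φ
    show (f^[i+1] (θ₀, φ)).2 = _
    rw [Function.iterate_succ_apply', hpair]
  have hFbcont : ∀ i, Continuous (Fb i) := by
    intro i
    exact continuous_snd.comp ((hf.iterate i).comp (continuous_const.prodMk continuous_id))
  have hFbbtw : ∀ (i : ℕ) (a b c : AddCircle (1:ℝ)),
      Btw.btw a b c → Btw.btw (Fb i a) (Fb i b) (Fb i c) := by
    intro i
    induction i with
    | zero => intro a b c hx; exact hx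
    | succ i ih =>
        intro a b c hx
        rw [hFbsucc, hFbsucc, hFbsucc]
        exact hmono _ _ _ _ (ih a b c hx)
  choose φs hφmono hφbdd hφdist using fun i => key (Fb i) (hFbcont i) (hFbbtw i)
  -- the main covering estimate
  have hlin : ∀ ε > (0:ℝ), ∃ C : ℕ, 1 ≤ C ∧ ∀ n : ℕ,
      Dynamics.coverMincard f Fib
        {p : (Θ × AddCircle (1 : ℝ)) × (Θ × AddCircle (1 : ℝ)) | dist p.1 p.2 < ε} n
        ≤ ((C * (n + 1) : ℕ) : ℕ∞) := by
    intro ε hε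
    set δ : ℝ := ε/2 with hδdef
    have hδ : 0 < δ := by positivity
    set C : ℕ := ⌈2/δ⌉₊ + 1 with hCdef
    have hC2 : 2/δ < (C:ℝ) := by
      have := Nat.le_ceil (2/δ)
      rw [hCdef]
      push_cast
      linarith
    refine ⟨C, le_add_self, ?_⟩
    intro n
    set S : ℝ → ℝ := fun x => ∑ i ∈ Finset.range (n+1), φs i x with hSdef
    have hSmono : ∀ x y, x ∈ Set.Ico (0:ℝ) 1 → y ∈ Set.Ico (0:ℝ) 1 → x ≤ y → S x ≤ S y :=
      fun x y hx hy hxy => Finset.sum_le_sum (fun i _ => hφmono i x y hx hy hxy)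
    have hS0 : ∀ x, x ∈ Set.Ico (0:ℝ) 1 → 0 ≤ S x :=
      fun x hx => Finset.sum_nonneg (fun i _ => (hφbdd i x hx).1)
    have hSbd : ∀ x, x ∈ Set.Ico (0:ℝ) 1 → S x ≤ 2*(n+1) := by
      intro x hx
      calc S x ≤ ∑ i ∈ Finset.range (n+1), 2 :=
            Finset.sum_le_sum (fun i _ => (hφbdd i x hx).2)
        _ = 2*(n+1) := by simp [mul_comm]
    have hstep : ∀ i ∈ Finset.range (n+1), ∀ x y, x ∈ Set.Ico (0:ℝ) 1 → y ∈ Set.Ico (0:ℝ) 1 →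
        x ≤ y → φs i y - φs i x ≤ S y - S x := by
      intro i hi x y hx hy hxy
      have h1 : ∑ j ∈ Finset.range (n+1), (φs j y - φs j x) = S y - S x := by
        rw [hSdef, Finset.sum_sub_distrib]
      rw [← h1]
      exact Finset.single_le_sum (f := fun j => φs j y - φs j x)
        (fun j _ => sub_nonneg.2 (hφmono j x y hx hy hxy)) hi
    have habs : ∀ i ∈ Finset.range (n+1), ∀ x y, x ∈ Set.Ico (0:ℝ) 1 → y ∈ Set.Ico (0:ℝ) 1 →
        |φs i x - φs i y| ≤ |S x - S y| := by
      intro i hi x y hx hy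
      rcases le_total x y with hxy | hxy
      · rw [abs_sub_comm, abs_sub_comm (S x)]
        rw [abs_of_nonneg (sub_nonneg.2 (hφmono i x y hx hy hxy)),
          abs_of_nonneg (sub_nonneg.2 (hSmono x y hx hy hxy))]
        exact hstep i hi x y hx hy hxy
      · rw [abs_of_nonneg (sub_nonneg.2 (hφmono i y x hy hx hxy)),
          abs_of_nonneg (sub_nonneg.2 (hSmono y x hy hx hxy))]
        exact hstep i hi y x hy hx hxy
    -- the pieces
    set P : ℕ → Set ℝ := fun k => {x | x ∈ Set.Ico (0:ℝ) 1 ∧ ↑k * δ ≤ S x ∧ S x < (↑k+1) * δ}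
      with hPdef
    set t : ℕ → ℝ := fun k => if hk : (P k).Nonempty then hk.some else 0 with htdef
    set s : Finset (Θ × AddCircle (1:ℝ)) :=
      (Finset.range (C*(n+1))).image (fun k => (θ₀, ((t k : ℝ) : AddCircle (1:ℝ)))) with hsdef
    have hcov : Dynamics.IsDynCoverOf f Fib
        {p : (Θ × AddCircle (1 : ℝ)) × (Θ × AddCircle (1 : ℝ)) | dist p.1 p.2 < ε} n ↑s := by
      intro p hp
      have hp1 : p.1 = θ₀ := hp.1
      obtain ⟨x, hxI, hxeq⟩ := AddCircle.eq_coe_Ico p.2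
      set k : ℕ := ⌊S x / δ⌋₊ with hkdef
      have hxP : x ∈ P k := by
        refine ⟨hxI, ?_, ?_⟩
        · have := Nat.floor_le (div_nonneg (hS0 x hxI) hδ.le)
          calc (k:ℝ) * δ ≤ (S x / δ) * δ := by
                apply mul_le_mul_of_nonneg_right _ hδ.le
                exact this
            _ = S x := by field_simp
        · have := Nat.lt_floor_add_one (S x / δ)
          calc S x = (S x / δ) * δ := by field_simp
            _ < ((k:ℝ)+1) * δ := by
                apply mul_lt_mul_of_pos_right _ hδ
                exact this
      have hPne : (P k).Nonempty := ⟨x, hxP⟩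
      have htk : t k ∈ P k := by
        rw [htdef]
        simp only [dif_pos hPne]
        exact hPne.some_mem
      have hklt : k < C*(n+1) := by
        rw [hkdef]
        rw [Nat.floor_lt (div_nonneg (hS0 x hxI) hδ.le)]
        calc S x / δ ≤ 2*((n:ℝ)+1)/δ := by
              exact div_le_div_of_nonneg_right (hSbd x hxI) hδ.le
          _ = (2/δ)*((n:ℝ)+1) := by ring
          _ < (C:ℝ)*((n:ℝ)+1) := by
              apply mul_lt_mul_of_pos_right hC2 (by positivity)
          _ = ((C*(n+1):ℕ):ℝ) := by push_cast; ring
      have hpeq : p = (θ₀, ((x:ℝ) : AddCircle (1:ℝ))) := Prod.ext hp1 hxeq.symm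
      have hcenter : (θ₀, ((t k : ℝ) : AddCircle (1:ℝ))) ∈ (↑s : Set (Θ × AddCircle (1:ℝ))) := by
        rw [hsdef]
        simp only [Finset.coe_image, Set.mem_image, Finset.mem_coe, Finset.mem_range]
        exact ⟨k, hklt, rfl⟩
      refine ⟨_, hcenter, ?_⟩
      have hmem2 : ((θ₀, ((t k : ℝ) : AddCircle (1:ℝ))), p) ∈ Dynamics.dynEntourage f
          {q : (Θ × AddCircle (1 : ℝ)) × (Θ × AddCircle (1 : ℝ)) | dist q.1 q.2 < ε} n := by
        rw [Dynamics.mem_dynEntourage]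
        intro j hj
        rw [hpeq, hpair, hpair]
        show dist _ _ < ε
        rw [Prod.dist_eq]
        apply max_lt (by simpa using hε)
        have hj' : j ∈ Finset.range (n+1) := by
          rw [Finset.mem_range]; omega
        calc dist (Fb j ((t k : ℝ) : AddCircle (1:ℝ))) (Fb j ((x:ℝ) : AddCircle (1:ℝ)))
            ≤ |φs j (t k) - φs j x| := hφdist j (t k) x htk.1 hxI
          _ ≤ |S (t k) - S x| := habs j hj' (t k) x htk.1 hxI
          _ < δ := by
              rw [abs_sub_lt_iff]
              constructor <;> linarith [htk.2.1, htk.2.2, hxP.2.1, hxP.2.2]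
          _ < ε := by rw [hδdef]; linarith
      rw [Dynamics.mem_dynEntourage] at hmem2 ⊢
      intro j hj
      have := hmem2 j hj
      show dist _ _ < ε
      rw [dist_comm]; exact this
    have h1 := Dynamics.IsDynCoverOf.coverMincard_le_card hcov
    refine h1.trans ?_
    have h2 : s.card ≤ C*(n+1) := le_trans Finset.card_image_le (le_of_eq (Finset.card_range _))
    exact_mod_cast h2
  have hne : Fib.Nonempty := ⟨(θ₀, 0), Set.mem_prod.2 ⟨rfl, Set.mem_univ _⟩⟩
  constructor
  · apply le_antisymm
    · rw [Dynamics.coverEntropy_eq_iSup_basis Metric.uniformity_basis_dist f Fib]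
      apply iSup₂_le
      intro ε hε
      obtain ⟨C, hC1, hC⟩ := hlin ε hε
      exact entourage_le f Fib _ C hC1 hC
    · have h0 := Dynamics.coverEntropyEntourage_univ f hne
      rw [← h0]
      exact Dynamics.coverEntropyEntourage_le_coverEntropy f Fib Filter.univ_mem
  · intro ε hε
    obtain ⟨C, _, hC⟩ := hlin ε hε
    exact ⟨C, hC⟩
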